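/- (Measure-theoretic form of the paper's main theorem on the critical sampling frequency f_DR.) Let S : ℝ → ℝ be measurable, nonnegative and Lebesgue-integrable, let θ > 0, F_θ := {f ∈ ℝ : S(f) > θ}, and set f_DR := μ(F_θ). Let f_s ≥ f_DR and let F ⊆ ℝ be measurable with μ(F) ≤ f_s such that ∫_F S(f) df ≥ ∫_G S(f) df for every measurable G with μ(G) ≤ f_s. Then ∫_F max(S(f) − θ, 0) df = ∫_ℝ max(S(f) − θ, 0) df and ∫_F log₂⁺(S(f)/θ) df = ∫_ℝ log₂⁺(S(f)/θ) df. Consequently the constrained waterfilling expressions (∫_ℝ S) − ∫_F [S − θ]⁺ and ½ ∫_F log₂⁺(S/θ) at any sampling-frequency budget f_s ≥ f_DR coincide with Pinsker's unconstrained distortion-rate quantities ∫_ℝ min(S, θ) and ½ ∫_ℝ log₂⁺(S/θ). -/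

import Mathlib

open MeasureTheory Set
open scoped ENNReal


lemma exists_subset_volume_eq {A : Set ℝ} (hA : MeasurableSet A) (hfin : volume A ≠ ⊤)
    {r : ℝ≥0∞} (hr : r ≤ volume A) :
    ∃ B, B ⊆ A ∧ MeasurableSet B ∧ volume B = r := by
  rcases eq_or_lt_of_le hr with heq | hlt
  · exact ⟨A, subset_rfl, hA, heq.symm⟩
  rcases eq_or_ne r 0 with rfl | hr0
  · exact ⟨∅, empty_subset _, MeasurableSet.empty, measure_empty⟩
  have hrfin : r ≠ ⊤ := by
    intro h; rw [h] at hlt; exact hfin (top_le_iff.mp hlt.le)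
  have hfin' : ∀ t : ℝ, volume (A ∩ Iic t) ≠ ⊤ :=
    fun t => ne_top_of_le_ne_top hfin (measure_mono inter_subset_left)
  set g : ℝ → ℝ := fun t => (volume (A ∩ Iic t)).toReal with hg
  have hmono : Monotone g := fun s t hst =>
    ENNReal.toReal_mono (hfin' t)
      (measure_mono (inter_subset_inter subset_rfl (Iic_subset_Iic.mpr hst)))
  have hlipkey : ∀ s t : ℝ, s ≤ t → g t ≤ g s + (t - s) := by
    intro s t hst
    have hsub : A ∩ Iic t ⊆ (A ∩ Iic s) ∪ Ioc s t := by
      rintro x ⟨hxA, hxt⟩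
      by_cases hxs : x ≤ s
      · exact Or.inl ⟨hxA, hxs⟩
      · exact Or.inr ⟨lt_of_not_ge hxs, hxt⟩
    have h1 : volume (A ∩ Iic t) ≤ volume (A ∩ Iic s) + ENNReal.ofReal (t - s) := by
      calc volume (A ∩ Iic t) ≤ volume ((A ∩ Iic s) ∪ Ioc s t) := measure_mono hsub
        _ ≤ volume (A ∩ Iic s) + volume (Ioc s t) := measure_union_le _ _
        _ = volume (A ∩ Iic s) + ENNReal.ofReal (t - s) := by rw [Real.volume_Ioc]
    calc g t ≤ (volume (A ∩ Iic s) + ENNReal.ofReal (t - s)).toReal :=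
          ENNReal.toReal_mono (by
            exact ENNReal.add_ne_top.mpr ⟨hfin' s, ENNReal.ofReal_ne_top⟩) h1
      _ = g s + (t - s) := by
          rw [ENNReal.toReal_add (hfin' s) ENNReal.ofReal_ne_top,
            ENNReal.toReal_ofReal (by linarith)]
  have hcont : Continuous g := by
    have : LipschitzWith 1 g := by
      apply LipschitzWith.of_dist_le_mul
      intro s t
      rw [Real.dist_eq, Real.dist_eq, NNReal.coe_one, one_mul]
      rcases le_total s t with h | h
      · rw [abs_of_nonpos (by simpa using hmono h), abs_of_nonpos (by linarith)]
        have := hlipkey s t h; linarith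
      · rw [abs_of_nonneg (by simpa using hmono h), abs_of_nonneg (by linarith)]
        have := hlipkey t s h; linarith
    exact this.continuous
  have hrpos : (0 : ℝ) < r.toReal := ENNReal.toReal_pos hr0 hrfin
  have hb : ∃ b : ℝ, r.toReal < g b := by
    by_contra h
    push_neg at h
    have hcover : A = ⋃ n : ℕ, A ∩ Iic (n : ℝ) := by
      ext x
      simp only [mem_iUnion, mem_inter_iff, mem_Iic]
      constructor
      · intro hx
        obtain ⟨n, hn⟩ := exists_nat_ge x
        exact ⟨n, hx, hn⟩
      · rintro ⟨n, hx, _⟩; exact hx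
    have hmono' : Monotone (fun n : ℕ => A ∩ Iic (n : ℝ)) := fun m n hmn =>
      inter_subset_inter subset_rfl (Iic_subset_Iic.mpr (Nat.cast_le.mpr hmn))
    have := hmono'.measure_iUnion (μ := volume)
    rw [← hcover] at this
    have hle : volume A ≤ r := by
      rw [this]
      refine iSup_le fun n => ?_
      exact (ENNReal.toReal_le_toReal (hfin' _) hrfin).mp (h _)
    exact absurd hle (not_le.mpr hlt)
  have ha : ∃ a : ℝ, g a < r.toReal := by
    by_contra h
    push_neg at h
    have hempty : ⋂ n : ℕ, (A ∩ Iic (-(n : ℝ))) = ∅ := by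
      ext x
      simp only [mem_iInter, mem_inter_iff, mem_Iic, mem_empty_iff_false, iff_false, not_forall]
      obtain ⟨n, hn⟩ := exists_nat_gt (-x)
      exact ⟨n, fun ⟨_, hx⟩ => by linarith⟩
    have hanti : Antitone (fun n : ℕ => A ∩ Iic (-(n : ℝ))) := fun m n hmn =>
      inter_subset_inter subset_rfl (Iic_subset_Iic.mpr (by exact_mod_cast neg_le_neg (by exact_mod_cast hmn)))
    have := hanti.measure_iInter (μ := volume)
      (fun n => (hA.inter measurableSet_Iic).nullMeasurableSet) ⟨0, hfin' _⟩
    rw [hempty, measure_empty] at this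
    have hle : r ≤ (0 : ℝ≥0∞) := by
      rw [this]
      exact le_iInf fun n => (ENNReal.toReal_le_toReal hrfin (hfin' _)).mp (h _)
    exact hr0 (le_antisymm hle zero_le)
  obtain ⟨a, ha⟩ := ha
  obtain ⟨b, hb⟩ := hb
  have hab : a ≤ b := by
    by_contra hba
    exact absurd (hmono (le_of_not_ge hba)) (not_le.mpr (ha.trans hb))
  have hIVT := intermediate_value_Icc hab hcont.continuousOn
  obtain ⟨t, _, ht⟩ := hIVT ⟨ha.le, hb.le⟩
  refine ⟨A ∩ Iic t, inter_subset_left, hA.inter measurableSet_Iic, ?_⟩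
  exact (ENNReal.toReal_eq_toReal_iff' (hfin' t) hrfin).mp ht

/-- Measure-theoretic form of the paper's main theorem on the critical
sampling frequency `f_DR = μ {S > θ}`: for any sampling budget `f_s ≥ f_DR` and any
energy-maximizing set `F` of measure at most `f_s`, the constrained waterfilling
rate and distortion expressions over `F` coincide with Pinsker's unconstrained ones. -/
theorem critical_sampling_frequency_achieves_DRF
    (S : ℝ → ℝ) (hSmeas : Measurable S) (hSnonneg : ∀ f, 0 ≤ S f)
    (hSint : Integrable S) (θ : ℝ) (hθ : 0 < θ)
    (fs : ℝ) (hfs : volume {f : ℝ | θ < S f} ≤ ENNReal.ofReal fs)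
    (F : Set ℝ) (hFmeas : MeasurableSet F)
    (hFle : volume F ≤ ENNReal.ofReal fs)
    (hmax : ∀ G : Set ℝ, MeasurableSet G → volume G ≤ ENNReal.ofReal fs →
      ∫ f in G, S f ≤ ∫ f in F, S f) :
    (∫ f in F, max (S f - θ) 0 = ∫ f, max (S f - θ) 0) ∧
    (∫ f in F, max (Real.logb 2 (S f / θ)) 0 = ∫ f, max (Real.logb 2 (S f / θ)) 0) ∧
    ((∫ f, S f) - (∫ f in F, max (S f - θ) 0) = ∫ f, min (S f) θ) := by
  set T : Set ℝ := {f : ℝ | θ < S f} with hTdef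
  have hTmeas : MeasurableSet T := measurableSet_lt measurable_const hSmeas
  have hfs_top : ENNReal.ofReal fs ≠ ⊤ := ENNReal.ofReal_ne_top
  have hTfin : volume T ≠ ⊤ := ne_top_of_le_ne_top hfs_top hfs
  have hFfin : volume F ≠ ⊤ := ne_top_of_le_ne_top hfs_top hFle
  -- strict lower bound for integrals over positive-measure subsets of T
  have hstrict : ∀ C : Set ℝ, MeasurableSet C → C ⊆ T → 0 < volume C → volume C ≠ ⊤ →
      θ * (volume C).toReal < ∫ f in C, S f := by
    intro C hCmeas hCT hCpos hCfin
    have hCint : IntegrableOn S C := hSint.integrableOn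
    have hconst : IntegrableOn (fun _ : ℝ => θ) C :=
      integrableOn_const hCfin
    have hsubint : IntegrableOn (fun f => S f - θ) C := hCint.sub hconst
    have hnn : 0 ≤ᵐ[volume.restrict C] fun f => S f - θ := by
      refine (ae_restrict_iff' hCmeas).mpr (ae_of_all _ fun x hx => ?_)
      have : θ < S x := hCT hx
      simp only [Pi.zero_apply]; linarith
    have hpos : 0 < ∫ f in C, (S f - θ) := by
      rw [setIntegral_pos_iff_support_of_nonneg_ae hnn hsubint]
      refine lt_of_lt_of_le hCpos (measure_mono fun x hx => ?_)
      refine ⟨?_, hx⟩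
      have : θ < S x := hCT hx
      simp only [Function.mem_support]
      intro h; rw [sub_eq_zero] at h; linarith
    have := integral_sub hCint hconst
    rw [setIntegral_const] at this
    rw [this] at hpos
    have : (volume C).toReal • θ = θ * (volume C).toReal := by
      rw [smul_eq_mul]; ring
    linarith [hpos, this ▸ hpos]
  -- upper bound on subsets of Tᶜ
  have hupper : ∀ C : Set ℝ, MeasurableSet C → C ⊆ Tᶜ → volume C ≠ ⊤ →
      ∫ f in C, S f ≤ θ * (volume C).toReal := by
    intro C hCmeas hCT hCfin
    have hconst : IntegrableOn (fun _ : ℝ => θ) C :=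
      integrableOn_const hCfin
    calc ∫ f in C, S f ≤ ∫ _ in C, θ := by
          refine setIntegral_mono_on hSint.integrableOn hconst hCmeas fun x hx => ?_
          have : ¬ θ < S x := hCT hx
          linarith [not_lt.mp this]
      _ = θ * (volume C).toReal := by rw [setIntegral_const, smul_eq_mul, measureReal_def]; ring
  -- key: T \ F is null
  have hkey : volume (T \ F) = 0 := by
    by_contra hA0
    have hApos : 0 < volume (T \ F) := pos_iff_ne_zero.mpr hA0
    have hAmeas : MeasurableSet (T \ F) := hTmeas.diff hFmeas
    have hAfin : volume (T \ F) ≠ ⊤ :=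
      ne_top_of_le_ne_top hTfin (measure_mono diff_subset)
    by_cases hcase : volume F + volume (T \ F) ≤ ENNReal.ofReal fs
    · -- add all of T \ F to F
      have hdisj : Disjoint F (T \ F) := disjoint_sdiff_right
      have hG := hmax (F ∪ (T \ F)) (hFmeas.union hAmeas)
        (le_trans (measure_union_le _ _) hcase)
      rw [setIntegral_union hdisj hAmeas hSint.integrableOn hSint.integrableOn] at hG
      have h1 : ∫ f in (T \ F), S f ≤ 0 := by linarith
      have h2 : 0 < ∫ f in (T \ F), S f := by
        have := hstrict (T \ F) hAmeas diff_subset hApos hAfin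
        have hmul : 0 < θ * (volume (T \ F)).toReal :=
          mul_pos hθ (ENNReal.toReal_pos hA0 hAfin)
        linarith
      linarith
    · push_neg at hcase
      -- then F \ T has positive measure; swap equal-measure pieces
      have hFT : volume (F ∩ T) + volume (T \ F) ≤ ENNReal.ofReal fs := by
        have : volume (F ∩ T) + volume (T \ F) = volume T := by
          rw [inter_comm]; exact measure_inter_add_diff T hFmeas
        rw [this]; exact hfs
      have hsplit : volume (F ∩ T) + volume (F \ T) = volume F :=
        measure_inter_add_diff F hTmeas
      have hFTpos : 0 < volume (F \ T) := by
        by_contra h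
        push_neg at h
        have h0 : volume (F \ T) = 0 := le_antisymm h zero_le
        rw [← hsplit, h0, add_zero] at hcase
        exact absurd hFT (not_le.mpr hcase)
      set r := min (volume (T \ F)) (volume (F \ T)) with hrdef
      have hrpos : 0 < r := lt_min hApos hFTpos
      have hrfin : r ≠ ⊤ := ne_top_of_le_ne_top hAfin (min_le_left _ _)
      obtain ⟨A', hA'sub, hA'meas, hA'vol⟩ :=
        exists_subset_volume_eq hAmeas hAfin (min_le_left _ _)
      obtain ⟨B, hBsub, hBmeas, hBvol⟩ :=
        exists_subset_volume_eq (hFmeas.diff hTmeas)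
          (ne_top_of_le_ne_top hFfin (measure_mono diff_subset)) (min_le_right _ _)
      have hBF : B ⊆ F := hBsub.trans diff_subset
      have hBfin : volume B ≠ ⊤ := hBvol ▸ hrfin
      have hA'fin : volume A' ≠ ⊤ := hA'vol ▸ hrfin
      have hGmeas : MeasurableSet ((F \ B) ∪ A') := (hFmeas.diff hBmeas).union hA'meas
      have hGvol : volume ((F \ B) ∪ A') ≤ ENNReal.ofReal fs := by
        calc volume ((F \ B) ∪ A') ≤ volume (F \ B) + volume A' := measure_union_le _ _
          _ = (volume F - volume B) + volume A' := by
              rw [measure_diff hBF hBmeas.nullMeasurableSet hBfin]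
          _ = (volume F - r) + r := by rw [hBvol, hA'vol]
          _ = volume F := by
              rw [tsub_add_cancel_of_le]
              exact le_trans (min_le_right _ _) (measure_mono diff_subset)
          _ ≤ ENNReal.ofReal fs := hFle
      have hG := hmax _ hGmeas hGvol
      have hdisj2 : Disjoint (F \ B) A' := by
        have : A' ⊆ Fᶜ := hA'sub.trans fun x hx => hx.2
        exact Disjoint.mono_left diff_subset (disjoint_compl_right.mono_right this)
      rw [setIntegral_union hdisj2 hA'meas hSint.integrableOn hSint.integrableOn] at hG
      have hFsplit : ∫ f in F, S f = (∫ f in F \ B, S f) + ∫ f in B, S f := by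
        rw [← setIntegral_union disjoint_sdiff_left hBmeas hSint.integrableOn
          hSint.integrableOn, diff_union_of_subset hBF]
      have hkey2 : ∫ f in A', S f ≤ ∫ f in B, S f := by
        rw [hFsplit] at hG; linarith
      have hA'pos : 0 < volume A' := hA'vol ▸ hrpos
      have hlow := hstrict A' hA'meas (hA'sub.trans diff_subset) hA'pos hA'fin
      have hup := hupper B hBmeas (hBsub.trans fun x hx => hx.2) hBfin
      rw [hA'vol] at hlow
      rw [hBvol] at hup
      linarith
  -- a.e. statement
  have haeF : ∀ᵐ x, x ∈ F ∨ S x ≤ θ := by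
    rw [Filter.eventually_iff, mem_ae_iff]
    refine measure_mono_null (fun x hx => ?_) hkey
    simp only [mem_compl_iff, mem_setOf_eq, not_or, not_le] at hx
    exact ⟨hx.2, hx.1⟩
  have conv : ∀ g : ℝ → ℝ, (∀ x, S x ≤ θ → g x = 0) →
      ∫ x in F, g x = ∫ x, g x := by
    intro g hg
    rw [← integral_indicator hFmeas]
    refine integral_congr_ae ?_
    filter_upwards [haeF] with x hx
    rcases hx with h | h
    · simp [Set.indicator_of_mem h]
    · simp [Set.indicator_apply, hg x h]
  have h1 : ∫ x in F, max (S x - θ) 0 = ∫ x, max (S x - θ) 0 :=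
    conv _ fun x hx => max_eq_right (by linarith)
  have h2 : ∫ x in F, max (Real.logb 2 (S x / θ)) 0
      = ∫ x, max (Real.logb 2 (S x / θ)) 0 := by
    refine conv _ fun x hx => max_eq_right ?_
    refine Real.logb_nonpos (by norm_num) ?_ ?_
    · exact div_nonneg (hSnonneg x) hθ.le
    · rw [div_le_one hθ]; exact hx
  refine ⟨h1, h2, ?_⟩
  have hmaxint : Integrable (fun x => max (S x - θ) 0) := by
    refine hSint.mono ?_ (ae_of_all _ fun x => ?_)
    · exact ((hSmeas.sub measurable_const).max measurable_const).aestronglyMeasurable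
    · rw [Real.norm_eq_abs, Real.norm_eq_abs, abs_of_nonneg (le_max_right _ _),
        abs_of_nonneg (hSnonneg x)]
      rcases le_total (S x) θ with h | h
      · rw [max_eq_right (by linarith)]; exact hSnonneg x
      · rw [max_eq_left (by linarith)]; linarith
  rw [h1, ← integral_sub hSint hmaxint]
  refine integral_congr_ae (ae_of_all _ fun x => ?_)
  show S x - max (S x - θ) 0 = min (S x) θ
  rcases le_total (S x) θ with h | h
  · rw [max_eq_right (by linarith : S x - θ ≤ 0), min_eq_left h, sub_zero]
  · rw [max_eq_left (by linarith : (0:ℝ) ≤ S x - θ), min_eq_right h]; ring
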